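/- For every even natural number N > 6, if ∑_{1 ≤ n ≤ N−1, gcd(n, N−n) > 1} Υ(n) · Υ(N − n) > 0, then ∑_{p prime, p ∣ N} ∑_{1 ≤ n ≤ N/p − 1} Λ₀(n) · Λ₀(N/p − n) > 0; that is, some prime p dividing N yields an even number N/p expressible as a sum of two primes. -/

import Mathlib

open scoped Classical
open Finset Real

/-- The master function `Υ`: `Υ(n) = log p` if `n = p²` for a prime `p` (note then
`p = √n`), `Υ(n) = log(p₁p₂)` if `n = p₁p₂` for distinct primes `p₁, p₂`, and
`Υ(n) = 0` otherwise. -/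
noncomputable def Upsilon (n : ℕ) : ℝ :=
  if ∃ p : ℕ, p.Prime ∧ n = p ^ 2 then Real.log (Nat.sqrt n)
  else if ∃ p₁ p₂ : ℕ, p₁.Prime ∧ p₂.Prime ∧ p₁ ≠ p₂ ∧ n = p₁ * p₂ then Real.log n
  else 0

/-- The truncated von Mangoldt function: `Λ₀(n) = log n` if `n` is prime, else `0`. -/
noncomputable def Lambda0 (n : ℕ) : ℝ := if n.Prime then Real.log n else 0

lemma Upsilon_nonneg (n : ℕ) : 0 ≤ Upsilon n := by
  unfold Upsilon
  split_ifs with h1 h2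
  · obtain ⟨p, hp, rfl⟩ := h1
    apply Real.log_nonneg
    have : 1 ≤ Nat.sqrt (p ^ 2) := Nat.le_sqrt.mpr (by nlinarith [hp.two_le])
    exact_mod_cast this
  · obtain ⟨p₁, p₂, h₁, h₂, _, rfl⟩ := h2
    apply Real.log_nonneg
    have : 1 ≤ p₁ * p₂ := Nat.one_le_iff_ne_zero.mpr (Nat.mul_ne_zero h₁.ne_zero h₂.ne_zero)
    exact_mod_cast this
  · exact le_rfl

lemma Lambda0_nonneg (n : ℕ) : 0 ≤ Lambda0 n := by
  unfold Lambda0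
  split_ifs with h
  · exact Real.log_nonneg (by exact_mod_cast h.one_le)
  · exact le_refl 0

lemma Upsilon_structure {n : ℕ} (h : Upsilon n ≠ 0) :
    ∃ a b : ℕ, a.Prime ∧ b.Prime ∧ n = a * b := by
  unfold Upsilon at h
  split_ifs at h with h1 h2
  · obtain ⟨p, hp, rfl⟩ := h1
    exact ⟨p, p, hp, hp, (sq p)⟩
  · obtain ⟨p₁, p₂, hp₁, hp₂, _, rfl⟩ := h2
    exact ⟨p₁, p₂, hp₁, hp₂, rfl⟩
  · exact absurd rfl h

lemma exists_prime_quot {q n a b : ℕ} (hq : q.Prime) (ha : a.Prime) (hb : b.Prime)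
    (hn : n = a * b) (hd : q ∣ n) : ∃ c, c.Prime ∧ n = q * c := by
  subst hn
  rcases (hq.dvd_mul.mp hd) with hcase | hcase
  · exact ⟨b, hb, by rw [(Nat.prime_dvd_prime_iff_eq hq ha).mp hcase]⟩
  · exact ⟨a, ha, by rw [(Nat.prime_dvd_prime_iff_eq hq hb).mp hcase, mul_comm]⟩

/-- For every even `N > 6`, if `∑_{1 ≤ n ≤ N−1, gcd(n, N−n) > 1} Υ(n)·Υ(N−n) > 0`,
then `∑_{p ∣ N prime} ∑_{1 ≤ n ≤ N/p−1} Λ₀(n)·Λ₀(N/p−n) > 0`. -/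
theorem lambda0_correlation_pos_of_upsilon_noncoprime_pos (N : ℕ) (hN : Even N)
    (hN6 : 6 < N)
    (h : 0 < ∑ n ∈ (Finset.Icc 1 (N - 1)).filter (fun n => 1 < Nat.gcd n (N - n)),
        Upsilon n * Upsilon (N - n)) :
    0 < ∑ p ∈ N.primeFactors, ∑ n ∈ Finset.Icc 1 (N / p - 1),
        Lambda0 n * Lambda0 (N / p - n) := by
  -- extract a positive term
  obtain ⟨n, hn, hpos⟩ : ∃ n ∈ (Finset.Icc 1 (N - 1)).filter
      (fun n => 1 < Nat.gcd n (N - n)), 0 < Upsilon n * Upsilon (N - n) := by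
    by_contra hc
    push_neg at hc
    have : ∑ n ∈ (Finset.Icc 1 (N - 1)).filter (fun n => 1 < Nat.gcd n (N - n)),
        Upsilon n * Upsilon (N - n) ≤ 0 := Finset.sum_nonpos hc
    linarith
  rw [Finset.mem_filter, Finset.mem_Icc] at hn
  obtain ⟨⟨hn1, hn2⟩, hgcd⟩ := hn
  have hUn : Upsilon n ≠ 0 := by
    intro h0; rw [h0, zero_mul] at hpos; exact lt_irrefl 0 hpos
  have hUm : Upsilon (N - n) ≠ 0 := by
    intro h0; rw [h0, mul_zero] at hpos; exact lt_irrefl 0 hpos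
  obtain ⟨a, b, ha, hb, hab⟩ := Upsilon_structure hUn
  obtain ⟨a', b', ha', hb', hab'⟩ := Upsilon_structure hUm
  obtain ⟨q, hq, hqd⟩ := Nat.exists_prime_and_dvd
    (show Nat.gcd n (N - n) ≠ 1 by omega)
  have hqn : q ∣ n := hqd.trans (Nat.gcd_dvd_left _ _)
  have hqm : q ∣ (N - n) := hqd.trans (Nat.gcd_dvd_right _ _)
  obtain ⟨c, hc, hnc⟩ := exists_prime_quot hq ha hb hab hqn
  obtain ⟨d, hd, hmd⟩ := exists_prime_quot hq ha' hb' hab' hqm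
  have hNeq : N = q * (c + d) := by
    have h1 : n + (N - n) = N := by omega
    rw [mul_add, ← hnc, ← hmd]; omega
  have hqpos : 0 < q := hq.pos
  have hNq : N / q = c + d := by rw [hNeq, Nat.mul_div_cancel_left _ hqpos]
  have hc2 := hc.two_le
  have hd2 := hd.two_le
  apply Finset.sum_pos'
  · intro p _
    exact Finset.sum_nonneg fun i _ => mul_nonneg (Lambda0_nonneg i) (Lambda0_nonneg _)
  · refine ⟨q, ?_, ?_⟩
    · exact Nat.mem_primeFactors.mpr ⟨hq, ⟨c + d, hNeq⟩, by omega⟩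
    · apply Finset.sum_pos'
      · intro i _
        exact mul_nonneg (Lambda0_nonneg i) (Lambda0_nonneg _)
      · refine ⟨c, Finset.mem_Icc.mpr ⟨by omega, by omega⟩, ?_⟩
        have hsub : N / q - c = d := by omega
        rw [hsub]
        unfold Lambda0
        rw [if_pos hc, if_pos hd]
        exact mul_pos (Real.log_pos (by exact_mod_cast hc.one_lt))
          (Real.log_pos (by exact_mod_cast hd.one_lt))
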